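/- Let f ∈ C(ℝⁿ) ∩ L^∞(ℝⁿ) and let g ∈ C(ℝⁿ) be radially symmetric. Suppose there exist α ≥ 0, β ≥ 0, γ₀ ∈ ℝ such that f(x) e^{α|x|} |x|^β → γ₀ as |x| → ∞, and ∫_{ℝⁿ} |g(x)| e^{α|x|} (1 + |x|^β) dx < ∞. Then e^{α|y|} |y|^β ∫_{ℝⁿ} g(x + y) f(x) dx → γ₀ ∫_{ℝⁿ} g(x) e^{−α x₁} dx as |y| → ∞. -/

import Mathlib

open Real MeasureTheory Filter

open scoped RealInnerProductSpace

private lemma aux_rpow_bl {a b β : ℝ} (ha : 0 ≤ a) (hb : 0 ≤ b) (hβ : 0 ≤ β) :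
    (a + b) ^ β ≤ 2 ^ β * (a ^ β + b ^ β) := by
  have h1 : (a + b) ^ β ≤ (2 * max a b) ^ β := by
    apply Real.rpow_le_rpow (by positivity) _ hβ
    rcases le_total a b with h | h
    · simp [max_eq_right h]; linarith
    · simp [max_eq_left h]; linarith
  have h2 : (2 * max a b) ^ β = 2 ^ β * (max a b) ^ β :=
    Real.mul_rpow (by norm_num) (le_max_of_le_left ha)
  have h3 : (max a b) ^ β ≤ a ^ β + b ^ β := by
    rcases le_total a b with h | h
    · rw [max_eq_right h]; exact le_add_of_nonneg_left (Real.rpow_nonneg ha β)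
    · rw [max_eq_left h]; exact le_add_of_nonneg_right (Real.rpow_nonneg hb β)
  calc (a + b) ^ β ≤ 2 ^ β * (max a b) ^ β := h1.trans_eq h2
    _ ≤ 2 ^ β * (a ^ β + b ^ β) := by
        have : (0:ℝ) ≤ 2 ^ β := Real.rpow_nonneg (by norm_num) β
        nlinarith

/-- Pointwise limit along a sequence going to infinity with converging direction. -/
private lemma aux_pt_bl (n : ℕ) (f : EuclideanSpace ℝ (Fin n) → ℝ)
    (α β γ₀ : ℝ)
    (hf_lim : Tendsto (fun x : EuclideanSpace ℝ (Fin n) => f x * exp (α * ‖x‖) * ‖x‖ ^ β)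
      (cocompact (EuclideanSpace ℝ (Fin n))) (nhds γ₀))
    (ω : EuclideanSpace ℝ (Fin n))
    (y : ℕ → EuclideanSpace ℝ (Fin n))
    (hy : Tendsto (fun k => ‖y k‖) atTop atTop)
    (hdir : Tendsto (fun k => ‖y k‖⁻¹ • y k) atTop (nhds ω))
    (x : EuclideanSpace ℝ (Fin n)) :
    Tendsto (fun k => f (x - y k) * exp (α * ‖y k‖) * ‖y k‖ ^ β) atTop
      (nhds (γ₀ * exp (α * ⟪x, ω⟫))) := by
  set z : ℕ → EuclideanSpace ℝ (Fin n) := fun k => x - y k with hzdef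
  have hzy : ∀ k, ‖y k‖ - ‖x‖ ≤ ‖z k‖ := by
    intro k
    have h1 : ‖y k‖ - ‖x‖ ≤ ‖y k - x‖ := norm_sub_norm_le _ _
    have h2 : ‖y k - x‖ = ‖z k‖ := norm_sub_rev _ _
    linarith
  have hz : Tendsto (fun k => ‖z k‖) atTop atTop :=
    tendsto_atTop_mono (fun k => by linarith [hzy k])
      (tendsto_atTop_add_const_right atTop (-‖x‖) hy)
  have hzc : Tendsto z atTop (cocompact (EuclideanSpace ℝ (Fin n))) := by
    rw [← Metric.cobounded_eq_cocompact, ← tendsto_norm_atTop_iff_cobounded]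
    exact hz
  have hA : Tendsto (fun k => f (z k) * exp (α * ‖z k‖) * ‖z k‖ ^ β) atTop (nhds γ₀) :=
    hf_lim.comp hzc
  have hev : ∀ᶠ k in atTop, ‖x‖ < ‖y k‖ := hy.eventually_gt_atTop ‖x‖
  have hdiff : ∀ k, |‖z k‖ - ‖y k‖| ≤ ‖x‖ := by
    intro k
    have h := abs_norm_sub_norm_le (z k) (-(y k))
    simp only [norm_neg] at h
    have h2 : z k - -(y k) = x := by simp [hzdef]
    rwa [h2] at h
  have hratio : ∀ (a b : ℕ → ℝ), Tendsto b atTop atTop →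
      (∀ k, |a k - b k| ≤ ‖x‖) →
      Tendsto (fun k => a k / b k) atTop (nhds 1) := by
    intro a b hb hab
    have h0 : Tendsto (fun k => (a k - b k) / b k) atTop (nhds 0) := by
      apply squeeze_zero_norm' _ (Tendsto.div_atTop (tendsto_const_nhds (x := ‖x‖)) hb)
      filter_upwards [hb.eventually_gt_atTop 0] with k h2
      rw [Real.norm_eq_abs, abs_div, abs_of_pos h2]
      gcongr
      exact hab k
    have heq : ∀ᶠ k in atTop, 1 + (a k - b k) / b k = a k / b k := by
      filter_upwards [hb.eventually_gt_atTop 0] with k h2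
      field_simp
      ring
    have := (tendsto_const_nhds (x := (1:ℝ)) (f := atTop)).add h0
    rw [add_zero] at this
    exact this.congr' heq
  have hCyz : Tendsto (fun k => ‖y k‖ / ‖z k‖) atTop (nhds 1) :=
    hratio _ _ hz (fun k => by have := hdiff k; rw [abs_sub_comm] at this; exact this)
  have hCzy : Tendsto (fun k => ‖z k‖ / ‖y k‖) atTop (nhds 1) := hratio _ _ hy hdiff
  have hinner : Tendsto (fun k => ⟪x, ‖y k‖⁻¹ • y k⟫) atTop (nhds ⟪x, ω⟫) :=
    (tendsto_const_nhds (x := x)).inner hdir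
  have hnum : Tendsto (fun k => 2 * ⟪x, ‖y k‖⁻¹ • y k⟫ - ‖x‖ ^ 2 / ‖y k‖) atTop
      (nhds (2 * ⟪x, ω⟫ - 0)) :=
    (hinner.const_mul 2).sub (Tendsto.div_atTop tendsto_const_nhds hy)
  have hden : Tendsto (fun k => 1 + ‖z k‖ / ‖y k‖) atTop (nhds (1 + 1)) :=
    tendsto_const_nhds.add hCzy
  have hB : Tendsto (fun k => ‖y k‖ - ‖z k‖) atTop (nhds ⟪x, ω⟫) := by
    have hq := hnum.div hden (by norm_num)
    have hval : (2 * ⟪x, ω⟫ - 0) / (1 + 1) = ⟪x, ω⟫ := by ring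
    rw [hval] at hq
    apply hq.congr'
    filter_upwards [hev] with k hk
    have ht : (0:ℝ) < ‖y k‖ := (norm_nonneg x).trans_lt hk
    have hs : (0:ℝ) < ‖z k‖ := by linarith [hzy k]
    have hs2 : ‖z k‖ ^ 2 = ‖x‖ ^ 2 - 2 * ⟪x, y k⟫ + ‖y k‖ ^ 2 := norm_sub_sq_real x (y k)
    have hip : ⟪x, ‖y k‖⁻¹ • y k⟫ = ‖y k‖⁻¹ * ⟪x, y k⟫ := real_inner_smul_right _ _ _
    have hts : (0:ℝ) < ‖y k‖ + ‖z k‖ := by linarith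
    have key : (‖y k‖ - ‖z k‖) * (‖y k‖ + ‖z k‖) = 2 * ⟪x, y k⟫ - ‖x‖ ^ 2 := by nlinarith
    simp only [Pi.div_apply]
    rw [hip]
    have hrw : (2 * (‖y k‖⁻¹ * ⟪x, y k⟫) - ‖x‖ ^ 2 / ‖y k‖) / (1 + ‖z k‖ / ‖y k‖)
        = (2 * ⟪x, y k⟫ - ‖x‖ ^ 2) / (‖y k‖ + ‖z k‖) := by
      rw [div_eq_div_iff (by positivity) hts.ne']
      field_simp
    rw [hrw, ← key, mul_div_assoc, div_self hts.ne', mul_one]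
  have hExp : Tendsto (fun k => exp (α * (‖y k‖ - ‖z k‖))) atTop (nhds (exp (α * ⟪x, ω⟫))) :=
    (Real.continuous_exp.tendsto _).comp (hB.const_mul α)
  have hPow : Tendsto (fun k => (‖y k‖ / ‖z k‖) ^ β) atTop (nhds 1) := by
    have h := (Real.continuousAt_rpow_const 1 β (Or.inl one_ne_zero)).tendsto.comp hCyz
    simpa [Function.comp_def] using h
  have hcomb := (hA.mul hExp).mul hPow
  rw [mul_one] at hcomb
  apply hcomb.congr'
  filter_upwards [hev] with k hk
  have ht : (0:ℝ) < ‖y k‖ := (norm_nonneg x).trans_lt hk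
  have hs : (0:ℝ) < ‖z k‖ := by linarith [hzy k]
  have hexp : exp (α * ‖z k‖) * exp (α * (‖y k‖ - ‖z k‖)) = exp (α * ‖y k‖) := by
    rw [← exp_add]; congr 1; ring
  have hpw : ‖z k‖ ^ β * (‖y k‖ / ‖z k‖) ^ β = ‖y k‖ ^ β := by
    rw [← Real.mul_rpow hs.le (by positivity)]
    congr 1
    field_simp
  calc f (z k) * exp (α * ‖z k‖) * ‖z k‖ ^ β * exp (α * (‖y k‖ - ‖z k‖)) * (‖y k‖ / ‖z k‖) ^ β
      = f (z k) * (exp (α * ‖z k‖) * exp (α * (‖y k‖ - ‖z k‖))) *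
          (‖z k‖ ^ β * (‖y k‖ / ‖z k‖) ^ β) := by ring
    _ = f (x - y k) * exp (α * ‖y k‖) * ‖y k‖ ^ β := by rw [hexp, hpw]

/-- Berestycki–Lions interaction lemma: if `f` is continuous, bounded, with
`f(x) e^{α|x|}|x|^β → γ₀` as `|x| → ∞`, and `g` is continuous, radially symmetric and
`∫ |g(x)| e^{α|x|}(1+|x|^β) dx < ∞`, then
`e^{α|y|}|y|^β ∫ g(x+y) f(x) dx → γ₀ ∫ g(x) e^{−α x₁} dx` as `|y| → ∞`. -/
theorem stmt_3 (n : ℕ) (hn : 0 < n) (f g : EuclideanSpace ℝ (Fin n) → ℝ)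
    (hf_cont : Continuous f) (hf_bdd : ∃ M, ∀ x, |f x| ≤ M)
    (hg_cont : Continuous g)
    (hg_radial : ∀ x y : EuclideanSpace ℝ (Fin n), ‖x‖ = ‖y‖ → g x = g y)
    (α β γ₀ : ℝ) (hα : 0 ≤ α) (hβ : 0 ≤ β)
    (hf_lim : Tendsto (fun x : EuclideanSpace ℝ (Fin n) => f x * exp (α * ‖x‖) * ‖x‖ ^ β)
      (cocompact (EuclideanSpace ℝ (Fin n))) (nhds γ₀))
    (hg_int : Integrable (fun x : EuclideanSpace ℝ (Fin n) =>
      |g x| * exp (α * ‖x‖) * (1 + ‖x‖ ^ β))) :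
    Tendsto (fun y : EuclideanSpace ℝ (Fin n) =>
        exp (α * ‖y‖) * ‖y‖ ^ β * ∫ x, g (x + y) * f x)
      (cocompact (EuclideanSpace ℝ (Fin n)))
      (nhds (γ₀ * ∫ x : EuclideanSpace ℝ (Fin n), g x * exp (-(α * x ⟨0, hn⟩)))) := by
  -- the bound constant C
  obtain ⟨C, hC0, hC⟩ : ∃ C, 0 ≤ C ∧ ∀ z : EuclideanSpace ℝ (Fin n),
      |f z| * exp (α * ‖z‖) * (1 + ‖z‖ ^ β) ≤ C := by
    obtain ⟨M, hM⟩ := hf_bdd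
    have hM0 : 0 ≤ M := le_trans (abs_nonneg _) (hM 0)
    have h1 : ∀ᶠ z in cocompact (EuclideanSpace ℝ (Fin n)),
        |f z * exp (α * ‖z‖) * ‖z‖ ^ β| ≤ |γ₀| + 1 := by
      filter_upwards [Metric.tendsto_nhds.mp hf_lim 1 one_pos] with z hz
      rw [Real.dist_eq] at hz
      have := abs_sub_abs_le_abs_sub (f z * exp (α * ‖z‖) * ‖z‖ ^ β) γ₀
      linarith
    obtain ⟨K, hK, hKp⟩ := (Filter.hasBasis_cocompact.eventually_iff).mp h1
    obtain ⟨R₀, hR₀⟩ := hK.isBounded.subset_closedBall 0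
    set R : ℝ := max R₀ 1 with hRdef
    have hR1 : (1:ℝ) ≤ R := le_max_right _ _
    refine ⟨max (M * exp (α * R) * (1 + R ^ β)) (2 * (|γ₀| + 1)),
      le_max_of_le_right (by positivity), fun z => ?_⟩
    rcases le_or_gt ‖z‖ R with h | h
    · refine le_max_of_le_left ?_
      have e1 : exp (α * ‖z‖) ≤ exp (α * R) :=
        exp_le_exp.2 (mul_le_mul_of_nonneg_left h hα)
      have e2 : ‖z‖ ^ β ≤ R ^ β := Real.rpow_le_rpow (norm_nonneg _) h hβ
      have e3 : (0:ℝ) ≤ ‖z‖ ^ β := Real.rpow_nonneg (norm_nonneg _) β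
      have hexp : (0:ℝ) < exp (α * ‖z‖) := exp_pos _
      exact mul_le_mul (mul_le_mul (hM z) e1 hexp.le hM0) (by linarith) (by linarith)
        (by positivity)
    · refine le_max_of_le_right ?_
      have hz1 : (1:ℝ) ≤ ‖z‖ := hR1.trans h.le
      have hzK : z ∉ K := by
        intro hzK
        have h2 := hR₀ hzK
        rw [Metric.mem_closedBall, dist_zero_right] at h2
        have : ‖z‖ ≤ R := h2.trans (le_max_left _ _)
        linarith
      have hb := hKp hzK
      have habs : |f z * exp (α * ‖z‖) * ‖z‖ ^ β| = |f z| * exp (α * ‖z‖) * ‖z‖ ^ β := by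
        rw [abs_mul, abs_mul, abs_of_pos (exp_pos _),
          abs_of_nonneg (Real.rpow_nonneg (norm_nonneg _) β)]
      rw [habs] at hb
      have h1z : (1:ℝ) ≤ ‖z‖ ^ β := by
        calc (1:ℝ) = 1 ^ β := (Real.one_rpow β).symm
          _ ≤ ‖z‖ ^ β := Real.rpow_le_rpow zero_le_one hz1 hβ
      have hfe : (0:ℝ) ≤ |f z| * exp (α * ‖z‖) := by positivity
      calc |f z| * exp (α * ‖z‖) * (1 + ‖z‖ ^ β)
          ≤ |f z| * exp (α * ‖z‖) * (2 * ‖z‖ ^ β) := by nlinarith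
        _ = 2 * (|f z| * exp (α * ‖z‖) * ‖z‖ ^ β) := by ring
        _ ≤ 2 * (|γ₀| + 1) := by linarith
  -- domination
  have hdom : ∀ (y x : EuclideanSpace ℝ (Fin n)),
      |g x * f (x - y)| * (exp (α * ‖y‖) * ‖y‖ ^ β)
        ≤ (2 ^ β * C) * (|g x| * exp (α * ‖x‖) * (1 + ‖x‖ ^ β)) := by
    intro y x
    set z := x - y with hz
    have htri : ‖y‖ ≤ ‖x‖ + ‖z‖ := by
      have hxy : y = x - z := by rw [hz]; abel
      rw [hxy]; exact norm_sub_le x z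
    have hexp : exp (α * ‖y‖) ≤ exp (α * ‖x‖) * exp (α * ‖z‖) := by
      rw [← exp_add]
      exact exp_le_exp.2 (by nlinarith)
    have hpow : ‖y‖ ^ β ≤ 2 ^ β * (‖x‖ ^ β + ‖z‖ ^ β) :=
      (Real.rpow_le_rpow (norm_nonneg _) htri hβ).trans
        (aux_rpow_bl (norm_nonneg _) (norm_nonneg _) hβ)
    have hfz1 : |f z| * exp (α * ‖z‖) ≤ C := by
      have h := hC z
      have h2 : (0:ℝ) ≤ ‖z‖ ^ β := Real.rpow_nonneg (norm_nonneg _) β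
      nlinarith [abs_nonneg (f z), (exp_pos (α * ‖z‖)).le]
    have hfz2 : |f z| * exp (α * ‖z‖) * ‖z‖ ^ β ≤ C := by
      have h := hC z
      nlinarith [abs_nonneg (f z), (exp_pos (α * ‖z‖)).le]
    have hxβ : (0:ℝ) ≤ ‖x‖ ^ β := Real.rpow_nonneg (norm_nonneg _) β
    have hyβ : (0:ℝ) ≤ ‖y‖ ^ β := Real.rpow_nonneg (norm_nonneg _) β
    rw [abs_mul]
    calc |g x| * |f z| * (exp (α * ‖y‖) * ‖y‖ ^ β)
        ≤ |g x| * |f z| *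
            ((exp (α * ‖x‖) * exp (α * ‖z‖)) * (2 ^ β * (‖x‖ ^ β + ‖z‖ ^ β))) := by
          apply mul_le_mul_of_nonneg_left _ (by positivity)
          exact mul_le_mul hexp hpow hyβ (by positivity)
      _ = 2 ^ β * (|g x| * exp (α * ‖x‖)) *
            ((|f z| * exp (α * ‖z‖)) * ‖x‖ ^ β + |f z| * exp (α * ‖z‖) * ‖z‖ ^ β) := by ring
      _ ≤ 2 ^ β * (|g x| * exp (α * ‖x‖)) * (C * ‖x‖ ^ β + C) := by
          apply mul_le_mul_of_nonneg_left _ (by positivity)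
          exact add_le_add (mul_le_mul_of_nonneg_right hfz1 hxβ) hfz2
      _ = (2 ^ β * C) * (|g x| * exp (α * ‖x‖) * (1 + ‖x‖ ^ β)) := by ring
  -- rotation invariance of the limiting integral
  have hrot : ∀ ω : EuclideanSpace ℝ (Fin n), ‖ω‖ = 1 →
      (∫ x, g x * exp (α * ⟪x, ω⟫))
        = ∫ x : EuclideanSpace ℝ (Fin n), g x * exp (-(α * x ⟨0, hn⟩)) := by
    intro ω hω
    set e0 : EuclideanSpace ℝ (Fin n) := EuclideanSpace.single ⟨0, hn⟩ (1:ℝ) with he0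
    have hne0 : ‖(-e0 : EuclideanSpace ℝ (Fin n))‖ = 1 := by simp [he0]
    set R := Submodule.reflection (ℝ ∙ (ω - -e0))ᗮ with hR
    have hRω : R ω = -e0 := Submodule.reflection_sub (by rw [hω, hne0])
    have hR2 : R (-e0) = ω := by rw [← hRω, Submodule.reflection_reflection]
    have hkey : ∀ x, g (R x) * exp (α * ⟪R x, ω⟫) = g x * exp (-(α * x ⟨0, hn⟩)) := by
      intro x
      have h1 : g (R x) = g x := hg_radial _ _ (R.norm_map x)
      have h2 : ⟪R x, ω⟫ = -(x ⟨0, hn⟩) := by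
        rw [← hR2, R.inner_map_map, inner_neg_right, he0,
          EuclideanSpace.inner_single_right]
        simp
      rw [h1, h2]; ring_nf
    calc ∫ x, g x * exp (α * ⟪x, ω⟫)
        = ∫ x, g (R x) * exp (α * ⟪R x, ω⟫) :=
          ((R.measurePreserving).integral_comp R.toHomeomorph.measurableEmbedding _).symm
      _ = ∫ x : EuclideanSpace ℝ (Fin n), g x * exp (-(α * x ⟨0, hn⟩)) := by
          simp_rw [hkey]
  -- rewriting the integral
  have hrewrite : ∀ y : EuclideanSpace ℝ (Fin n),
      exp (α * ‖y‖) * ‖y‖ ^ β * ∫ x, g (x + y) * f x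
        = ∫ x, (exp (α * ‖y‖) * ‖y‖ ^ β) * (g x * f (x - y)) := by
    intro y
    rw [MeasureTheory.integral_const_mul]
    congr 1
    calc (∫ x, g (x + y) * f x) = ∫ x, g (x + y) * f (x + y - y) := by simp
      _ = ∫ x, g x * f (x - y) :=
          integral_add_right_eq_self (fun x => g x * f (x - y)) y
  -- the key sequential convergence
  have key : ∀ (y : ℕ → EuclideanSpace ℝ (Fin n)) (ω : EuclideanSpace ℝ (Fin n)), ‖ω‖ = 1 →
      Tendsto (fun k => ‖y k‖) atTop atTop →
      Tendsto (fun k => ‖y k‖⁻¹ • y k) atTop (nhds ω) →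
      Tendsto (fun k => ∫ x, (exp (α * ‖y k‖) * ‖y k‖ ^ β) * (g x * f (x - y k))) atTop
        (nhds (γ₀ * ∫ x : EuclideanSpace ℝ (Fin n), g x * exp (-(α * x ⟨0, hn⟩)))) := by
    intro y ω hω hy hdir
    have hDCT := MeasureTheory.tendsto_integral_of_dominated_convergence
      (F := fun k x => (exp (α * ‖y k‖) * ‖y k‖ ^ β) * (g x * f (x - y k)))
      (f := fun x => (γ₀ * exp (α * ⟪x, ω⟫)) * g x)
      (bound := fun x => (2 ^ β * C) * (|g x| * exp (α * ‖x‖) * (1 + ‖x‖ ^ β)))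
      (fun k => ((continuous_const.mul (hg_cont.mul (hf_cont.comp
        (continuous_id.sub continuous_const))))).aestronglyMeasurable)
      (hg_int.const_mul _)
      (fun k => Eventually.of_forall fun x => by
        have h1 : (0:ℝ) ≤ exp (α * ‖y k‖) * ‖y k‖ ^ β := by positivity
        rw [Real.norm_eq_abs, abs_mul, abs_of_nonneg h1, mul_comm]
        exact hdom (y k) x)
      (Eventually.of_forall fun x => by
        have h := aux_pt_bl n f α β γ₀ hf_lim ω y hy hdir x
        have h2 := h.mul_const (g x)
        apply h2.congr
        intro k
        ring)
    have heq : (∫ x, (γ₀ * exp (α * ⟪x, ω⟫)) * g x)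
        = γ₀ * ∫ x : EuclideanSpace ℝ (Fin n), g x * exp (-(α * x ⟨0, hn⟩)) := by
      rw [← hrot ω hω, ← MeasureTheory.integral_const_mul]
      exact integral_congr_ae (Eventually.of_forall fun x => by ring)
    rwa [heq] at hDCT
  -- assembling via subsequences
  haveI : (cocompact (EuclideanSpace ℝ (Fin n))).IsCountablyGenerated := by
    rw [← Metric.cobounded_eq_cocompact, ← comap_norm_atTop]
    infer_instance
  apply tendsto_of_subseq_tendsto
  intro ns hns
  classical
  have hnorm : Tendsto (fun k => ‖ns k‖) atTop atTop :=
    tendsto_norm_cocompact_atTop.comp hns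
  set u : ℕ → EuclideanSpace ℝ (Fin n) := fun k =>
    if ns k = 0 then EuclideanSpace.single ⟨0, hn⟩ (1:ℝ) else ‖ns k‖⁻¹ • ns k with hu
  have humem : ∀ k, u k ∈ Metric.sphere (0 : EuclideanSpace ℝ (Fin n)) 1 := by
    intro k
    rw [mem_sphere_zero_iff_norm, hu]
    by_cases h : ns k = 0
    · simp [h]
    · simp only [if_neg h]
      rw [norm_smul, norm_inv, norm_norm]
      field_simp [norm_ne_zero_iff.mpr h]
  obtain ⟨ω, hωmem, ms, hms, hmstend⟩ :=
    (isCompact_sphere (0 : EuclideanSpace ℝ (Fin n)) 1).tendsto_subseq humem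
  refine ⟨ms, ?_⟩
  set y : ℕ → EuclideanSpace ℝ (Fin n) := fun k => ns (ms k) with hy
  have hyn : Tendsto (fun k => ‖y k‖) atTop atTop := hnorm.comp hms.tendsto_atTop
  have hdir : Tendsto (fun k => ‖y k‖⁻¹ • y k) atTop (nhds ω) := by
    apply hmstend.congr'
    filter_upwards [hyn.eventually_gt_atTop 0] with k hk
    have hne : ns (ms k) ≠ 0 := by
      intro h0
      rw [hy] at hk
      simp [h0] at hk
    simp only [Function.comp_apply, hu, if_neg hne, hy]
  have hω1 : ‖ω‖ = 1 := mem_sphere_zero_iff_norm.mp hωmem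
  have hkey := key y ω hω1 hyn hdir
  apply hkey.congr
  intro k
  exact (hrewrite (y k)).symm
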